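/- Let A be a simple directed animal in ZxN, and enumerate its vertices increasingly for ≼: a_0 ≼ a_1 ≼ …, setting x_k := x(a_k). Then the sequence (x_k) satisfies: (a) x_{k+1} − x_k ∈ ℤ_{<0} ∪ {1} for all k, and (b) x_0 is even, and x_{k+1} is even whenever x_{k+1} ≤ (min_{i≤k} x_i) − 2. Moreover the map Ψ : A ↦ (x_k) is a bijection between the set of simple animals and the set of (finite or infinite) integer sequences satisfying (a) and (b); its inverse is given by recovering the heights via y_0 := 0 and y_k := 1 + max{ y_i : i < k and |x_k − x_i| = 1 } (with max ∅ = −1), so that Ψ^{-1}((x_k)) = {(x_k , y_k)}. -/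

import Mathlib

/-- A vertex of the lattice: an x-coordinate in ℤ and a height in ℕ. -/
abbrev Vertex := ℤ × ℕ

/-- Membership in the lattice ZxN = {(x,y) ∈ ℤ×ℕ : x+y even}. -/
def inLattice (v : Vertex) : Prop := Even (v.1 + (v.2 : ℤ))

/-- A directed animal. -/
def IsAnimal (A : Set Vertex) : Prop :=
  A.Nonempty ∧ (∀ v ∈ A, inLattice v) ∧
    ∀ v ∈ A, 0 < v.2 → ((v.1 - 1, v.2 - 1) ∈ A ∨ (v.1 + 1, v.2 - 1) ∈ A)

/-- One step of a chain witnessing the partial order ◁ inside `A`. -/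
def chainStep (A : Set Vertex) (u v : Vertex) : Prop :=
  u ∈ A ∧ v ∈ A ∧ u.2 < v.2 ∧ |v.1 - u.1| ≤ 1

/-- The relation a ◁ b. -/
def triLT (A : Set Vertex) (a b : Vertex) : Prop :=
  Relation.ReflTransGen (chainStep A) a b

/-- The total order a ≼ b on a directed animal. -/
def preOrd (A : Set Vertex) (a b : Vertex) : Prop :=
  triLT A a b ∨ (¬ triLT A a b ∧ ¬ triLT A b a ∧ b.1 < a.1)

/-- `e` enumerates `A` increasingly for ≼, with (possibly infinite) length `len`:
the values `e k` for `k < len` are exactly the elements of `A`, listed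
strictly increasingly for ≼. -/
def IsEnum (A : Set Vertex) (e : ℕ → Vertex) (len : ℕ∞) : Prop :=
  (∀ k : ℕ, (k : ℕ∞) < len → e k ∈ A) ∧
  (∀ v ∈ A, ∃ k : ℕ, (k : ℕ∞) < len ∧ e k = v) ∧
  (∀ j k : ℕ, (j : ℕ∞) < len → (k : ℕ∞) < len → j < k →
      preOrd A (e j) (e k) ∧ e j ≠ e k)

/-- A simple animal: a directed animal which is finite, or infinite with (A,≼)
order-isomorphic to (ℕ,≤); equivalently, a directed animal whose vertices can be
enumerated increasingly for ≼ along an initial segment of ℕ. -/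
def IsSimple (A : Set Vertex) : Prop :=
  IsAnimal A ∧ ∃ (e : ℕ → Vertex) (len : ℕ∞), IsEnum A e len

/-- A (finite or infinite) integer sequence: a length `len ∈ ℕ∞` and values `x k`
for `k < len` (values beyond the length are normalized to 0 so that the sequence is
determined by its meaningful entries). -/
structure PSeq where
  len : ℕ∞
  x : ℕ → ℤ
  trunc : ∀ k : ℕ, ¬ ((k : ℕ∞) < len) → x k = 0

/-- Condition (a): increments belong to ℤ_{<0} ∪ {1}. -/
def CondA (x : ℕ → ℤ) (len : ℕ∞) : Prop :=
  ∀ k : ℕ, ((k + 1 : ℕ) : ℕ∞) < len → (x (k+1) - x k < 0 ∨ x (k+1) - x k = 1)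

/-- Condition (b): x₀ is even, and x_{k+1} is even whenever
x_{k+1} ≤ (min_{i≤k} x_i) − 2. -/
def CondB (x : ℕ → ℤ) (len : ℕ∞) : Prop :=
  (0 < len → Even (x 0)) ∧
  ∀ k : ℕ, ((k + 1 : ℕ) : ℕ∞) < len →
    x (k+1) ≤ (Finset.range (k+1)).inf' Finset.nonempty_range_add_one x - 2 →
    Even (x (k+1))

/-- Sequences in the image of Ψ: nonempty and satisfying (a) and (b). -/
def GoodSeq (s : PSeq) : Prop := 0 < s.len ∧ CondA s.x s.len ∧ CondB s.x s.len

namespace PathEnc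

lemma triLT_height {A : Set Vertex} {a b : Vertex} (h : triLT A a b) :
    a = b ∨ a.2 < b.2 := by
  induction h with
  | refl => exact Or.inl rfl
  | tail _ hstep ih =>
    rcases ih with rfl | ih
    · exact Or.inr hstep.2.2.1
    · exact Or.inr (ih.trans hstep.2.2.1)

lemma triLT_mem_left {A : Set Vertex} {a b : Vertex} (h : triLT A a b) (hb : b ∈ A) : a ∈ A := by
  induction h with
  | refl => exact hb
  | tail _ hstep ih => exact ih hstep.1

lemma not_preOrd_of_triLT {A : Set Vertex} {a b : Vertex}
    (h : triLT A a b) (hne : a ≠ b) (h2 : preOrd A b a) : False := by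
  rcases h2 with h2 | ⟨_, h2, _⟩
  · rcases triLT_height h with rfl | h1
    · exact hne rfl
    rcases triLT_height h2 with rfl | h3
    · exact hne rfl
    omega
  · exact h2 h

section Enum

variable {A : Set Vertex} {e : ℕ → Vertex} {len : ℕ∞}

lemma castlt {j k : ℕ} (h : j < k) (hk : (k : ℕ∞) < len) : (j : ℕ∞) < len :=
  lt_of_lt_of_le (by exact_mod_cast h) hk.le

lemma enum_inj (hE : IsEnum A e len) {j k : ℕ} (hj : (j : ℕ∞) < len)
    (hk : (k : ℕ∞) < len) (h : e j = e k) : j = k := by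
  rcases lt_trichotomy j k with hlt | heq | hlt
  · exact absurd h (hE.2.2 j k hj hk hlt).2
  · exact heq
  · exact absurd h.symm (hE.2.2 k j hk hj hlt).2

lemma enum_lt_of_triLT (hE : IsEnum A e len) {j k : ℕ} (hj : (j : ℕ∞) < len)
    (hk : (k : ℕ∞) < len) (h : triLT A (e j) (e k)) (hne : e j ≠ e k) : j < k := by
  rcases lt_trichotomy j k with hlt | heq | hlt
  · exact hlt
  · exact absurd (heq ▸ rfl) hne
  · exact absurd (hE.2.2 k j hk hj hlt).1 fun h2 => not_preOrd_of_triLT h hne h2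

/-- no element strictly between consecutive enumeration elements. -/
lemma no_between (hE : IsEnum A e len) {k : ℕ} (hk1 : ((k+1 : ℕ) : ℕ∞) < len)
    {v : Vertex} (hv : v ∈ A) (h1 : triLT A (e k) v) (h2 : triLT A v (e (k+1)))
    (hne1 : v ≠ e k) (hne2 : v ≠ e (k+1)) : False := by
  have hk : (k : ℕ∞) < len := castlt (Nat.lt_succ_self k) hk1
  obtain ⟨m, hm, rfl⟩ := hE.2.1 v hv
  have h3 := enum_lt_of_triLT hE hk hm h1 (fun h => hne1 h.symm)
  have h4 := enum_lt_of_triLT hE hm hk1 h2 hne2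
  omega

end Enum

end PathEnc
namespace PathEnc

lemma abs_one_iff {x y : ℤ} : |x - y| = 1 ↔ (x = y - 1 ∨ x = y + 1) := by
  rw [abs_eq (by norm_num : (0:ℤ) ≤ 1)]; omega

lemma abs_le_one_iff {x y : ℤ} : |x - y| ≤ 1 ↔ (y - 1 ≤ x ∧ x ≤ y + 1) := by
  rw [abs_le]; omega

lemma even_sub_parity {a b : ℤ} (ha : Even a) (hb : Even b) : (a - b) % 2 = 0 := by
  rcases ha with ⟨r, rfl⟩; rcases hb with ⟨s, rfl⟩; omega

section Part1

variable {A : Set Vertex} {e : ℕ → Vertex} {len : ℕ∞}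

lemma single_step (hE : IsEnum A e len) {k : ℕ} (hk1 : ((k+1 : ℕ) : ℕ∞) < len)
    (h : triLT A (e k) (e (k+1))) (hne : e k ≠ e (k+1)) :
    chainStep A (e k) (e (k+1)) := by
  rcases h.cases_head with heq | ⟨c, hstep, hrest⟩
  · exact absurd heq hne
  by_cases hcb : c = e (k+1)
  · exact hcb ▸ hstep
  · exfalso
    refine no_between hE hk1 hstep.2.1 (Relation.ReflTransGen.single hstep) hrest ?_ hcb
    intro h; exact absurd (h ▸ hstep.2.2.1) (lt_irrefl _)

/-- if v ∈ A has positive height then it has a parent in A, with the parent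
relation spelled out conveniently. -/
lemma parent_exists (hA : IsAnimal A) {v : Vertex} (hv : v ∈ A) (hpos : 0 < v.2) :
    ∃ p : Vertex, p ∈ A ∧ (p.1 = v.1 - 1 ∨ p.1 = v.1 + 1) ∧ (p.2 : ℤ) = (v.2 : ℤ) - 1 := by
  rcases hA.2.2 v hv hpos with hp | hp
  · exact ⟨_, hp, Or.inl rfl, by simp; omega⟩
  · exact ⟨_, hp, Or.inr rfl, by simp; omega⟩

lemma enum_condA (hA : IsAnimal A) (hE : IsEnum A e len) :
    CondA (fun k => (e k).1) len := by
  intro k hk1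
  have hk : (k : ℕ∞) < len := castlt (Nat.lt_succ_self k) hk1
  obtain ⟨hOrd, hne⟩ := hE.2.2 k (k+1) hk hk1 (Nat.lt_succ_self k)
  simp only
  rcases hOrd with h | ⟨_, _, hx⟩
  · obtain ⟨ha, hb, hy, habs⟩ := single_step hE hk1 h hne
    rw [abs_le_one_iff] at habs
    rcases lt_trichotomy ((e (k+1)).1 - (e k).1) 0 with h1 | h1 | h1
    · exact Or.inl h1
    · exfalso
      -- same x coordinate : parity forces height gap ≥ 2, a parent lies strictly between
      have hpa : Even ((e k).1 + ((e k).2 : ℤ)) := hA.2.1 _ ha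
      have hpb : Even ((e (k+1)).1 + ((e (k+1)).2 : ℤ)) := hA.2.1 _ hb
      have hpar := even_sub_parity hpb hpa
      have hyy : (e k).2 + 2 ≤ (e (k+1)).2 := by omega
      obtain ⟨p, hp, hp1, hp2⟩ := parent_exists hA hb (by omega)
      have hpy : (e k).2 < p.2 := by omega
      refine no_between hE hk1 hp
        (Relation.ReflTransGen.single ⟨ha, hp, hpy, by rw [abs_le_one_iff]; omega⟩)
        (Relation.ReflTransGen.single ⟨hp, hb, by omega, by rw [abs_le_one_iff]; omega⟩)
        ?_ ?_
      · intro h; rw [h] at hpy; omega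
      · intro h; rw [h] at hp2; omega
    · exact Or.inr (by omega)
  · exact Or.inl (by omega)

lemma enum_y0 (hA : IsAnimal A) (hE : IsEnum A e len) (h0 : (0 : ℕ∞) < len) :
    (e 0).2 = 0 := by
  by_contra hpos
  have hpos : 0 < (e 0).2 := Nat.pos_of_ne_zero hpos
  have h0' : ((0 : ℕ) : ℕ∞) < len := by exact_mod_cast h0
  have ha := hE.1 0 h0'
  obtain ⟨p, hp, hp1, hp2⟩ := parent_exists hA ha hpos
  obtain ⟨m, hm, rfl⟩ := hE.2.1 p hp
  have hne : e m ≠ e 0 := by intro h; rw [h] at hp2; omega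
  have hm0 : 0 < m := by
    rcases Nat.eq_zero_or_pos m with rfl | h; · exact absurd rfl hne
    · exact h
  exact not_preOrd_of_triLT
    (Relation.ReflTransGen.single ⟨hp, ha, by omega, by rw [abs_le_one_iff]; omega⟩)
    hne (hE.2.2 0 m h0' hm hm0).1

lemma enum_condB (hA : IsAnimal A) (hE : IsEnum A e len) :
    CondB (fun k => (e k).1) len := by
  constructor
  · intro h0
    have h0' : ((0 : ℕ) : ℕ∞) < len := by exact_mod_cast h0
    have := hA.2.1 _ (hE.1 0 h0')
    rw [inLattice, enum_y0 hA hE h0] at this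
    simpa using this
  · intro k hk1 hle
    simp only at hle ⊢
    have hb := hE.1 (k+1) hk1
    have hy0 : (e (k+1)).2 = 0 := by
      by_contra hpos
      have hpos : 0 < (e (k+1)).2 := Nat.pos_of_ne_zero hpos
      obtain ⟨p, hp, hp1, hp2⟩ := parent_exists hA hb hpos
      obtain ⟨m, hm, rfl⟩ := hE.2.1 p hp
      have hne : e m ≠ e (k+1) := by intro h; rw [h] at hp2; omega
      rcases lt_trichotomy m (k+1) with hmlt | heq | hmgt
      · have hmem : m ∈ Finset.range (k+1) := Finset.mem_range.2 hmlt
        have := Finset.inf'_le (α := ℤ) (fun i => (e i).1) hmem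
        omega
      · exact hne (by rw [heq])
      · exact not_preOrd_of_triLT
          (Relation.ReflTransGen.single ⟨hp, hb, by omega, by rw [abs_le_one_iff]; omega⟩)
          hne (hE.2.2 (k+1) m hk1 hm hmgt).1
    have := hA.2.1 _ hb
    rw [inLattice, hy0] at this
    simpa using this

/-- heights along the enumeration satisfy the max-recursion. -/
lemma height_rec (hA : IsAnimal A) (hE : IsEnum A e len) {k : ℕ} (hk : (k : ℕ∞) < len) :
    (∀ i < k, |(e k).1 - (e i).1| = 1 → (e i).2 < (e k).2) ∧
    (0 < (e k).2 → ∃ i < k, |(e k).1 - (e i).1| = 1 ∧ ((e i).2 : ℤ) = ((e k).2 : ℤ) - 1) := by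
  have hkA := hE.1 k hk
  constructor
  · intro i hik hdist
    rw [abs_one_iff] at hdist
    have hi : (i : ℕ∞) < len := castlt hik hk
    have hiA := hE.1 i hi
    rcases lt_trichotomy (e i).2 (e k).2 with h | h | h
    · exact h
    · exfalso
      have h1 := hA.2.1 _ hiA
      have h2 := hA.2.1 _ hkA
      rw [inLattice] at h1 h2
      have := even_sub_parity h2 h1
      omega
    · exfalso
      have hne : e k ≠ e i := by intro hh; rw [hh] at h; omega
      have := enum_lt_of_triLT hE hk hi
        (Relation.ReflTransGen.single ⟨hkA, hiA, h, by rw [abs_le_one_iff]; omega⟩) hne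
      omega
  · intro hpos
    obtain ⟨p, hp, hp1, hp2⟩ := parent_exists hA hkA hpos
    obtain ⟨m, hm, rfl⟩ := hE.2.1 p hp
    have hne : e m ≠ e k := by intro h; rw [h] at hp2; omega
    rcases lt_trichotomy m k with hmlt | heq | hmgt
    · exact ⟨m, hmlt, by rw [abs_one_iff]; omega, by omega⟩
    · exact absurd (by rw [heq]) hne
    · exact absurd (hE.2.2 k m hk hm hmgt).1
        (fun h => not_preOrd_of_triLT
          (Relation.ReflTransGen.single ⟨hp, hkA, by omega, by rw [abs_le_one_iff]; omega⟩)
          hne h)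

end Part1

end PathEnc
namespace PathEnc

lemma preOrd_antisymm {A : Set Vertex} {a b : Vertex} (h1 : preOrd A a b)
    (h2 : preOrd A b a) (hne : a ≠ b) : False := by
  rcases h1 with h1 | ⟨h1, h1', _⟩
  · exact not_preOrd_of_triLT h1 hne h2
  · rcases h2 with h2 | ⟨_, _, hx⟩
    · exact h1' h2
    · omega

lemma enat_le_of_forall_lt {a b : ℕ∞} (h : ∀ k : ℕ, (k : ℕ∞) < a → (k : ℕ∞) < b) :
    a ≤ b := by
  by_contra hba
  rw [not_le] at hba
  induction b using WithTop.recTopCoe with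
  | top => exact absurd hba (not_top_lt)
  | coe n => exact absurd (h n hba) (lt_irrefl _)

section Unique

variable {A : Set Vertex} {e e' : ℕ → Vertex} {len len' : ℕ∞}

lemma enum_sub (h1 : IsEnum A e len) (h2 : IsEnum A e' len') :
    ∀ k : ℕ, (k : ℕ∞) < len → (k : ℕ∞) < len' ∧ e k = e' k := by
  intro k
  induction k using Nat.strong_induction_on with
  | _ k IH =>
  intro hk
  obtain ⟨m, hm, hme⟩ := h2.2.1 (e k) (h1.1 k hk)
  rcases lt_trichotomy m k with hlt | rfl | hgt
  · exfalso
    have hmlen : (m : ℕ∞) < len := castlt hlt hk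
    have heq := (IH m hlt hmlen).2
    exact absurd (enum_inj h1 hmlen hk (heq.trans hme)) (Nat.ne_of_lt hlt)
  · exact ⟨hm, hme.symm⟩
  · have hk' : (k : ℕ∞) < len' := castlt hgt hm
    obtain ⟨n, hn, hne⟩ := h1.2.1 (e' k) (h2.1 k hk')
    rcases lt_trichotomy n k with hlt2 | rfl | hgt2
    · exfalso
      have hnlen' : (n : ℕ∞) < len' := castlt hlt2 hk'
      have heq := (IH n hlt2 (castlt hlt2 hk)).2
      exact absurd (enum_inj h2 hnlen' hk' (heq.symm.trans hne)) (Nat.ne_of_lt hlt2)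
    · exact ⟨hk', hne⟩
    · exfalso
      have hab : e k ≠ e' k := by
        rw [← hne]; intro h
        exact absurd (enum_inj h1 hk hn h) (Nat.ne_of_lt hgt2)
      have p1 : preOrd A (e k) (e' k) := by
        rw [← hne]; exact (h1.2.2 k n hk hn hgt2).1
      have p2 : preOrd A (e' k) (e k) := by
        rw [← hme]; exact (h2.2.2 k m hk' hm hgt).1
      exact preOrd_antisymm p1 p2 hab

lemma enum_unique (h1 : IsEnum A e len) (h2 : IsEnum A e' len') :
    len = len' ∧ ∀ k : ℕ, (k : ℕ∞) < len → e k = e' k :=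
  ⟨le_antisymm (enat_le_of_forall_lt fun k hk => (enum_sub h1 h2 k hk).1)
      (enat_le_of_forall_lt fun k hk => (enum_sub h2 h1 k hk).1),
   fun k hk => (enum_sub h1 h2 k hk).2⟩

end Unique

end PathEnc
namespace PathEnc

noncomputable def yrec (x : ℕ → ℤ) : ℕ → ℕ
  | k => ((Finset.range k).filter fun i => |x k - x i| = 1).attach.sup
      fun i => yrec x i.1 + 1
decreasing_by
  exact Finset.mem_range.mp (Finset.mem_filter.mp i.2).1

lemma yrec_eq (x : ℕ → ℤ) (k : ℕ) :
    yrec x k = ((Finset.range k).filter fun i => |x k - x i| = 1).sup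
      (fun i => yrec x i + 1) := by
  rw [yrec]
  exact Finset.sup_attach ((Finset.range k).filter fun i => |x k - x i| = 1)
    (fun i => yrec x i + 1)

lemma yrec_lt_of_dist (x : ℕ → ℤ) {i k : ℕ} (hik : i < k)
    (hd : |x k - x i| = 1) : yrec x i < yrec x k := by
  have hmem : i ∈ (Finset.range k).filter fun i => |x k - x i| = 1 :=
    Finset.mem_filter.2 ⟨Finset.mem_range.2 hik, hd⟩
  have := Finset.le_sup (f := fun i => yrec x i + 1) hmem
  rw [← yrec_eq] at this
  exact lt_of_lt_of_le (Nat.lt_succ_self _) this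

section Seq

variable {x : ℕ → ℤ} {len : ℕ∞}

/-- running minimum -/
noncomputable def Mink (x : ℕ → ℤ) (k : ℕ) : ℤ :=
  (Finset.range (k+1)).inf' Finset.nonempty_range_add_one x

lemma mink_zero : Mink x 0 = x 0 := by
  simp [Mink]

lemma mink_le {i k : ℕ} (h : i ≤ k) : Mink x k ≤ x i :=
  Finset.inf'_le x (Finset.mem_range.2 (Nat.lt_succ_of_le h))

lemma mink_succ (k : ℕ) : Mink x (k+1) = min (x (k+1)) (Mink x k) := by
  apply le_antisymm
  · exact le_min (Finset.inf'_le x (Finset.mem_range.2 (Nat.lt_succ_self _)))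
      (Finset.inf'_mono x (Finset.range_subset_range.2 (Nat.le_succ _)) _)
  · apply Finset.le_inf'
    intro i hi
    rcases Nat.lt_succ_iff_lt_or_eq.mp (Finset.mem_range.mp hi) with h | rfl
    · exact (min_le_right _ _).trans (mink_le (Nat.lt_succ_iff.mp h))
    · exact min_le_left _ _

lemma step_cases (hA : CondA x len) {k : ℕ} (hk1 : ((k+1 : ℕ) : ℕ∞) < len) :
    x (k+1) < x k ∨ x (k+1) = x k + 1 := by
  rcases hA k hk1 with h | h
  · exact Or.inl (by omega)
  · exact Or.inr (by omega)

/-- the visited values contain the interval [running min, current value]. -/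
lemma visited_interval (hA : CondA x len) :
    ∀ k : ℕ, (k : ℕ∞) < len → ∀ z : ℤ, Mink x k ≤ z → z ≤ x k → ∃ i ≤ k, x i = z := by
  intro k
  induction k with
  | zero => intro _ z h1 h2; rw [mink_zero] at h1; exact ⟨0, le_refl _, by omega⟩
  | succ k IH =>
    intro hk1 z h1 h2
    have hk : (k : ℕ∞) < len := castlt (Nat.lt_succ_self k) hk1
    rw [mink_succ] at h1
    by_cases hz : z = x (k+1)
    · exact ⟨k+1, le_refl _, hz.symm⟩
    · have h2' : z < x (k+1) := lt_of_le_of_ne h2 hz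
      rcases step_cases hA hk1 with hs | hs
      · -- left jump: either z is in the old interval, or z = x (k+1) (excluded)
        have hz1 : Mink x k ≤ z := by omega
        obtain ⟨i, hi, hxi⟩ := IH hk z hz1 (by omega)
        exact ⟨i, hi.trans (Nat.le_succ k), hxi⟩
      · -- step +1
        obtain ⟨i, hi, hxi⟩ := IH hk z (by omega) (by omega)
        exact ⟨i, hi.trans (Nat.le_succ k), hxi⟩

/-- discrete intermediate value: between an index where `x ≤ c` and a later index
where `x > c`, some intermediate index has value exactly `c+1`. -/
lemma ivt (hA : CondA x len) {p : ℕ} {c : ℤ} (hc : x p ≤ c) :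
    ∀ q : ℕ, (q : ℕ∞) < len → p < q → c < x q → ∃ t, p < t ∧ t ≤ q ∧ x t = c + 1 := by
  intro q
  induction q with
  | zero => omega
  | succ q IH =>
    intro hq1 hpq hcq
    by_cases hq : c < x q
    · have hpq' : p < q := by
        rcases Nat.lt_succ_iff_lt_or_eq.mp hpq with h | rfl
        · exact h
        · omega
      obtain ⟨t, h1, h2, h3⟩ := IH (castlt (Nat.lt_succ_self q) hq1) hpq' hq
      exact ⟨t, h1, h2.trans (Nat.le_succ q), h3⟩
    · push_neg at hq
      rcases step_cases hA hq1 with hs | hs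
      · omega
      · exact ⟨q+1, hpq, le_refl _, by omega⟩

/-- key monotonicity: a later visit of the same column is strictly higher. -/
lemma yrec_lt_same_col (hA : CondA x len) {j k : ℕ} (hjk : j < k)
    (hk : (k : ℕ∞) < len) (hxx : x j = x k) : yrec x j < yrec x k := by
  obtain ⟨m, rfl⟩ : ∃ m, k = m + 1 := ⟨k - 1, by omega⟩
  rcases step_cases hA hk with hs | hs
  · -- left jump into x (m+1) = x j ; go via an intermediate visit of x j + 1
    have hjm : j < m := by
      rcases Nat.lt_succ_iff_lt_or_eq.mp hjk with h | rfl
      · exact h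
      · omega
    have hm : (m : ℕ∞) < len := castlt (Nat.lt_succ_self m) hk
    obtain ⟨t, ht1, ht2, ht3⟩ := ivt hA (le_refl (x j)) m hm hjm (by omega)
    have l1 : yrec x j < yrec x t := yrec_lt_of_dist x ht1 (by rw [abs_one_iff]; omega)
    have l2 : yrec x t < yrec x (m+1) :=
      yrec_lt_of_dist x (by omega) (by rw [abs_one_iff]; omega)
    omega
  · -- step +1 : then j < m and x j = x m + 1
    have hjm : j < m := by
      rcases Nat.lt_succ_iff_lt_or_eq.mp hjk with h | rfl
      · exact h
      · omega
    have l1 : yrec x j < yrec x m := yrec_lt_of_dist x hjm (by rw [abs_one_iff]; omega)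
    have l2 : yrec x m < yrec x (m+1) :=
      yrec_lt_of_dist x (Nat.lt_succ_self m) (by rw [abs_one_iff]; omega)
    omega

/-- strict height increase for horizontally close pairs. -/
lemma yrec_lt_close (hA : CondA x len) {j k : ℕ} (hjk : j < k)
    (hk : (k : ℕ∞) < len) (hd : |x k - x j| ≤ 1) : yrec x j < yrec x k := by
  rcases lt_trichotomy (x k - x j) 0 with h | h | h
  · exact yrec_lt_of_dist x hjk (by rw [abs_one_iff]; rw [abs_le_one_iff] at hd; omega)
  · exact yrec_lt_same_col hA hjk hk (by omega)
  · exact yrec_lt_of_dist x hjk (by rw [abs_one_iff]; rw [abs_le_one_iff] at hd; omega)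

/-- parity of the reconstructed vertices. -/
lemma yrec_parity (hA : CondA x len) (hB : CondB x len) :
    ∀ k : ℕ, (k : ℕ∞) < len → Even (x k + (yrec x k : ℤ)) := by
  intro k
  induction k using Nat.strong_induction_on with
  | _ k IH =>
  intro hk
  by_cases hne : ((Finset.range k).filter fun i => |x k - x i| = 1).Nonempty
  · obtain ⟨i, hi, hsup⟩ := Finset.exists_mem_eq_sup _ hne (fun i => yrec x i + 1)
    rw [← yrec_eq] at hsup
    obtain ⟨hir, hid⟩ := Finset.mem_filter.mp hi
    have hik := Finset.mem_range.mp hir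
    have hpi := IH i hik (castlt hik hk)
    rw [abs_one_iff] at hid
    rw [Int.even_iff] at hpi ⊢
    omega
  · -- no horizontal neighbour before k : the height is 0 and x k must be even
    rw [Finset.not_nonempty_iff_eq_empty] at hne
    have hy0 : yrec x k = 0 := by rw [yrec_eq, hne]; rfl
    rw [hy0]
    have hxe : Even (x k) := by
      rcases Nat.eq_zero_or_pos k with rfl | hkpos
      · exact hB.1 (lt_of_le_of_lt (zero_le) hk)
      · obtain ⟨m, rfl⟩ : ∃ m, k = m + 1 := ⟨k - 1, by omega⟩
        have hnb : ∀ i < m + 1, x i ≠ x (m+1) + 1 ∧ x i ≠ x (m+1) - 1 := by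
          intro i him
          constructor <;> intro hxi <;>
            exact absurd (hne ▸ Finset.mem_filter.2
              ⟨Finset.mem_range.2 him, by rw [abs_one_iff]; omega⟩)
              (Finset.notMem_empty i)
        rcases step_cases hA hk with hs | hs
        · -- left jump; show we jumped at least 2 below the running min
          have hmlen : (m : ℕ∞) < len := castlt (Nat.lt_succ_self m) hk
          have hfar : x (m+1) + 1 < Mink x m := by
            by_contra hcl
            push_neg at hcl
            obtain ⟨i, hi, hxi⟩ := visited_interval hA m hmlen (x (m+1) + 1) hcl (by omega)
            exact (hnb i (by omega)).1 hxi
          exact hB.2 m hk (by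
            have : Mink x m = (Finset.range (m+1)).inf' Finset.nonempty_range_add_one x := rfl
            omega)
        · exact absurd hs (by have := (hnb m (Nat.lt_succ_self m)).2; omega)
    simpa using hxe

end Seq

end PathEnc
namespace PathEnc

/-- the animal reconstructed from a sequence of x-coordinates. -/
def seqSet (x : ℕ → ℤ) (len : ℕ∞) : Set Vertex :=
  {v | ∃ k : ℕ, (k : ℕ∞) < len ∧ v = (x k, yrec x k)}

section SeqSet

variable {x : ℕ → ℤ} {len : ℕ∞}

lemma seqSet_mem {k : ℕ} (hk : (k : ℕ∞) < len) : (x k, yrec x k) ∈ seqSet x len :=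
  ⟨k, hk, rfl⟩

lemma seqSet_inj (hA : CondA x len) {j k : ℕ} (hjk : j < k) (hk : (k : ℕ∞) < len) :
    (x j, yrec x j) ≠ ((x k, yrec x k) : Vertex) := by
  intro h
  obtain ⟨h1, h2⟩ := Prod.mk.injEq .. ▸ h
  have := yrec_lt_same_col hA hjk hk h1
  omega

/-- if `x j ≤ x k`, the j-th vertex is ◁-below the k-th one. -/
lemma seqSet_triLT (hA : CondA x len) :
    ∀ d j k : ℕ, k - j = d → j < k → (k : ℕ∞) < len → x j ≤ x k →
      triLT (seqSet x len) (x j, yrec x j) (x k, yrec x k) := by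
  intro d
  induction d using Nat.strong_induction_on with
  | _ d IH =>
  intro j k hd hjk hk hx
  have hj : (j : ℕ∞) < len := castlt hjk hk
  by_cases hcl : x k ≤ x j + 1
  · exact Relation.ReflTransGen.single
      ⟨seqSet_mem hj, seqSet_mem hk,
        yrec_lt_close hA hjk hk (by rw [abs_le_one_iff]; omega),
        by rw [abs_le_one_iff]; omega⟩
  · push_neg at hcl
    obtain ⟨t, ht1, ht2, ht3⟩ := ivt hA (le_refl (x j)) k hk hjk (by omega)
    have htk : t < k :=
      lt_of_le_of_ne ht2 (fun h => by rw [h] at ht3; omega)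
    have hstep : triLT (seqSet x len) (x j, yrec x j) (x t, yrec x t) :=
      Relation.ReflTransGen.single
        ⟨seqSet_mem hj, seqSet_mem (castlt htk hk),
          yrec_lt_close hA ht1 (castlt htk hk) (by rw [abs_le_one_iff]; omega),
          by rw [abs_le_one_iff]; omega⟩
    exact hstep.trans (IH (k - t) (by omega) t k rfl htk hk (by omega))

/-- chain steps go forward in the enumeration. -/
lemma seqSet_step_forward (hA : CondA x len) {p q : ℕ}
    (hp : (p : ℕ∞) < len) (hq : (q : ℕ∞) < len)
    (h : chainStep (seqSet x len) (x p, yrec x p) (x q, yrec x q)) : p < q := by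
  obtain ⟨_, _, hy, hd⟩ := h
  simp only at hy hd
  rcases lt_trichotomy p q with h | rfl | h
  · exact h
  · omega
  · have := yrec_lt_close hA h hp (by rwa [abs_sub_comm] at hd)
    omega

lemma seqSet_chain_forward (hA : CondA x len) {a b : Vertex}
    (h : triLT (seqSet x len) a b) :
    ∀ n : ℕ, (n : ℕ∞) < len → a = (x n, yrec x n) →
    ∀ m : ℕ, (m : ℕ∞) < len → b = (x m, yrec x m) → n ≤ m := by
  induction h with
  | refl =>
    intro n hn ha m hm hb
    rcases lt_trichotomy n m with h | rfl | h
    · exact h.le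
    · exact le_refl _
    · exact absurd (hb ▸ ha) (seqSet_inj hA h hn)
  | tail hchain hstep ih =>
    intro n hn ha m hm hb
    obtain ⟨t, ht, hct⟩ := hstep.1
    have h1 := ih n hn ha t ht hct
    have h2 := seqSet_step_forward hA ht hm (hct ▸ hb ▸ hstep)
    omega

lemma seqSet_not_back (hA : CondA x len) {j k : ℕ} (hjk : j < k)
    (hk : (k : ℕ∞) < len) :
    ¬ triLT (seqSet x len) (x k, yrec x k) (x j, yrec x j) := by
  intro h
  have := seqSet_chain_forward hA h k hk rfl j (castlt hjk hk) rfl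
  omega

lemma seqSet_animal (hA : CondA x len) (hB : CondB x len) (h0 : 0 < len) :
    IsAnimal (seqSet x len) := by
  refine ⟨⟨(x 0, yrec x 0), seqSet_mem (by exact_mod_cast h0)⟩, ?_, ?_⟩
  · rintro v ⟨k, hk, rfl⟩
    exact yrec_parity hA hB k hk
  · rintro v ⟨k, hk, rfl⟩ hpos
    simp only at hpos
    have hne : ((Finset.range k).filter fun i => |x k - x i| = 1).Nonempty := by
      by_contra hcon
      rw [Finset.not_nonempty_iff_eq_empty] at hcon
      rw [yrec_eq, hcon] at hpos
      simp at hpos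
    obtain ⟨i, hi, hsup⟩ := Finset.exists_mem_eq_sup _ hne (fun i => yrec x i + 1)
    rw [← yrec_eq] at hsup
    obtain ⟨hir, hid⟩ := Finset.mem_filter.mp hi
    have hik := Finset.mem_range.mp hir
    have hiA : ((x i, yrec x i) : Vertex) ∈ seqSet x len := seqSet_mem (castlt hik hk)
    rw [abs_one_iff] at hid
    rcases hid with hid | hid
    · right
      have : ((x k + 1, yrec x k - 1) : Vertex) = (x i, yrec x i) := by
        rw [Prod.mk.injEq]; constructor
        · omega
        · omega
      simp only
      rw [this]; exact hiA
    · left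
      have : ((x k - 1, yrec x k - 1) : Vertex) = (x i, yrec x i) := by
        rw [Prod.mk.injEq]; constructor
        · omega
        · omega
      simp only
      rw [this]; exact hiA

lemma seqSet_enum (hA : CondA x len) :
    IsEnum (seqSet x len) (fun k => (x k, yrec x k)) len := by
  refine ⟨fun k hk => seqSet_mem hk, ?_, ?_⟩
  · rintro v ⟨k, hk, rfl⟩
    exact ⟨k, hk, rfl⟩
  · intro j k hj hk hjk
    refine ⟨?_, seqSet_inj hA hjk hk⟩
    by_cases hx : x j ≤ x k
    · exact Or.inl (seqSet_triLT hA (k - j) j k rfl hjk hk hx)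
    · by_cases ht : triLT (seqSet x len) (x j, yrec x j) (x k, yrec x k)
      · exact Or.inl ht
      · exact Or.inr ⟨ht, seqSet_not_back hA hjk hk, by simp only; omega⟩

end SeqSet

end PathEnc
namespace PathEnc

section RoundTrip

variable {A : Set Vertex} {e : ℕ → Vertex} {len : ℕ∞}

/-- the heights of an animal's enumeration are recovered by the `yrec` recursion
applied to any sequence agreeing with the x-coordinates. -/
lemma enum_height (hAn : IsAnimal A) (hE : IsEnum A e len) (xe : ℕ → ℤ)
    (hxe : ∀ i : ℕ, (i : ℕ∞) < len → xe i = (e i).1) :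
    ∀ k : ℕ, (k : ℕ∞) < len → yrec xe k = (e k).2 := by
  intro k
  induction k using Nat.strong_induction_on with
  | _ k IH =>
  intro hk
  have hfeq : ((Finset.range k).filter fun i => |xe k - xe i| = 1) =
      ((Finset.range k).filter fun i => |(e k).1 - (e i).1| = 1) := by
    apply Finset.filter_congr
    intro i hi
    have hik := Finset.mem_range.mp hi
    rw [hxe k hk, hxe i (castlt hik hk)]
  have hseq : ((Finset.range k).filter fun i => |(e k).1 - (e i).1| = 1).sup
      (fun i => yrec xe i + 1) =
      ((Finset.range k).filter fun i => |(e k).1 - (e i).1| = 1).sup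
      (fun i => (e i).2 + 1) := by
    apply Finset.sup_congr rfl
    intro i hi
    obtain ⟨hir, _⟩ := Finset.mem_filter.mp hi
    have hik := Finset.mem_range.mp hir
    rw [IH i hik (castlt hik hk)]
  rw [yrec_eq, hfeq, hseq]
  apply le_antisymm
  · apply Finset.sup_le
    intro i hi
    obtain ⟨hir, hid⟩ := Finset.mem_filter.mp hi
    have := (height_rec hAn hE hk).1 i (Finset.mem_range.mp hir) hid
    omega
  · rcases Nat.eq_zero_or_pos (e k).2 with hz | hz
    · omega
    · obtain ⟨i, hik, hid, hyi⟩ := (height_rec hAn hE hk).2 hz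
      have hmem : i ∈ (Finset.range k).filter fun i => |(e k).1 - (e i).1| = 1 :=
        Finset.mem_filter.2 ⟨Finset.mem_range.2 hik, hid⟩
      have := Finset.le_sup (f := fun i => (e i).2 + 1) hmem
      have h2 : (e i).2 + 1 = (e k).2 := by omega
      exact le_trans (le_of_eq h2.symm) this

end RoundTrip

/-- Ψ : the sequence of x-coordinates associated with a simple animal. -/
noncomputable def toSeq (A : Set Vertex) (hS : IsSimple A) : PSeq where
  len := hS.2.choose_spec.choose
  x := fun k => if (k : ℕ∞) < hS.2.choose_spec.choose then (hS.2.choose k).1 else 0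
  trunc := fun _ hk => if_neg hk

lemma toSeq_enum {A : Set Vertex} (hS : IsSimple A) :
    IsEnum A hS.2.choose hS.2.choose_spec.choose :=
  hS.2.choose_spec.choose_spec

lemma toSeq_len {A : Set Vertex} (hS : IsSimple A) :
    (toSeq A hS).len = hS.2.choose_spec.choose := rfl

lemma toSeq_x_eq {A : Set Vertex} (hS : IsSimple A) {k : ℕ}
    (hk : (k : ℕ∞) < (toSeq A hS).len) : (toSeq A hS).x k = (hS.2.choose k).1 := by
  show (if (k : ℕ∞) < hS.2.choose_spec.choose then (hS.2.choose k).1 else 0) = _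
  exact if_pos hk

lemma toSeq_good {A : Set Vertex} (hS : IsSimple A) : GoodSeq (toSeq A hS) := by
  have hE := toSeq_enum hS
  have hcA := enum_condA hS.1 hE
  have hcB := enum_condB hS.1 hE
  refine ⟨?_, ?_, ?_, ?_⟩
  · obtain ⟨v, hv⟩ := hS.1.1
    obtain ⟨k, hk, _⟩ := hE.2.1 v hv
    exact lt_of_le_of_lt (zero_le) hk
  · intro k hk1
    have hk : (k : ℕ∞) < (toSeq A hS).len := castlt (Nat.lt_succ_self k) hk1
    rw [toSeq_x_eq hS hk1, toSeq_x_eq hS hk]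
    exact hcA k hk1
  · intro h0
    have hk0 : ((0 : ℕ) : ℕ∞) < (toSeq A hS).len := by exact_mod_cast h0
    rw [toSeq_x_eq hS hk0]
    exact hcB.1 (by exact_mod_cast h0)
  · intro k hk1 hle
    have hinf : ((Finset.range (k+1)).inf' Finset.nonempty_range_add_one (toSeq A hS).x)
        = (Finset.range (k+1)).inf' Finset.nonempty_range_add_one
            (fun i => (hS.2.choose i).1) := by
      refine Finset.inf'_congr Finset.nonempty_range_add_one rfl ?_
      intro i hi
      exact toSeq_x_eq hS (castlt (Finset.mem_range.mp hi) hk1)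
    rw [toSeq_x_eq hS hk1] at hle ⊢
    rw [hinf] at hle
    exact hcB.2 k hk1 hle

/-- Ψ⁻¹ : the animal reconstructed from a sequence. -/
def ofSeq (s : PSeq) : Set Vertex := seqSet s.x s.len

lemma ofSeq_simple {s : PSeq} (h : GoodSeq s) : IsSimple (ofSeq s) :=
  ⟨seqSet_animal h.2.1 h.2.2 h.1, _, _, seqSet_enum h.2.1⟩

lemma PSeq.ext' {s t : PSeq} (h1 : s.len = t.len) (h2 : ∀ k, s.x k = t.x k) : s = t := by
  cases s; cases t
  simp only [PSeq.mk.injEq]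
  exact ⟨h1, funext h2⟩

lemma left_inv_aux {A : Set Vertex} (hS : IsSimple A) : ofSeq (toSeq A hS) = A := by
  have hE := toSeq_enum hS
  have hh := enum_height hS.1 hE (toSeq A hS).x (fun i hi => toSeq_x_eq hS hi)
  ext v
  constructor
  · rintro ⟨k, hk, rfl⟩
    rw [toSeq_x_eq hS hk, hh k hk]
    exact hE.1 k hk
  · intro hv
    obtain ⟨k, hk, rfl⟩ := hE.2.1 v hv
    exact ⟨k, hk, by rw [toSeq_x_eq hS hk, hh k hk]⟩

lemma right_inv_aux {s : PSeq} (h : GoodSeq s) :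
    toSeq (ofSeq s) (ofSeq_simple h) = s := by
  have hE1 := toSeq_enum (ofSeq_simple h)
  have hE2 : IsEnum (ofSeq s) (fun k => (s.x k, yrec s.x k)) s.len := seqSet_enum h.2.1
  obtain ⟨hl, hv⟩ := enum_unique hE1 hE2
  refine PSeq.ext' hl ?_
  intro k
  by_cases hk : (k : ℕ∞) < (toSeq (ofSeq s) (ofSeq_simple h)).len
  · rw [toSeq_x_eq (ofSeq_simple h) hk, hv k hk]
  · rw [(toSeq (ofSeq s) (ofSeq_simple h)).trunc k hk,
      s.trunc k (by rwa [toSeq_len, hl] at hk)]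

/-- the bijection Ψ. -/
noncomputable def Phi : {A : Set Vertex // IsSimple A} ≃ {s : PSeq // GoodSeq s} where
  toFun := fun A => ⟨toSeq A.1 A.2, toSeq_good A.2⟩
  invFun := fun s => ⟨ofSeq s.1, ofSeq_simple s.2⟩
  left_inv := fun A => Subtype.ext (left_inv_aux A.2)
  right_inv := fun s => Subtype.ext (right_inv_aux s.2)

lemma sup_cast_fold (s : Finset ℕ) (f : ℕ → ℕ) :
    ((s.sup fun i => f i + 1 : ℕ) : ℤ) = 1 + s.fold max (-1) (fun i => (f i : ℤ)) := by
  induction s using Finset.induction_on with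
  | empty => simp
  | insert a s ha ih =>
    rw [Finset.sup_insert, Finset.fold_insert ha]
    push_cast [Nat.cast_max]
    rw [ih]
    rw [show ((f _ : ℤ) + 1) = 1 + (f _ : ℤ) by ring, max_add_add_left]

end PathEnc

/-- path encoding of simple animals.
(1) If `A` is a simple animal enumerated increasingly for ≼ by `e` (with length
`len`), then the sequence of x-coordinates `k ↦ x(e k)` satisfies (a) and (b).
(2) The map Ψ : A ↦ (x_k) is a bijection between simple animals and (finite or
infinite) sequences satisfying (a) and (b); the inverse map recovers the heights
via y₀ = 0 and y_k = 1 + max{ y_i : i < k, |x_k − x_i| = 1 } (max ∅ = −1),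
so that Ψ⁻¹((x_k)) = {(x_k, y_k)}. -/
theorem path_encoding_of_simple_animals :
    (∀ (A : Set Vertex) (e : ℕ → Vertex) (len : ℕ∞),
        IsSimple A → IsEnum A e len →
        CondA (fun k => (e k).1) len ∧ CondB (fun k => (e k).1) len) ∧
    (∃ Φ : {A : Set Vertex // IsSimple A} ≃ {s : PSeq // GoodSeq s},
      (∀ (A : {A : Set Vertex // IsSimple A}) (e : ℕ → Vertex) (len : ℕ∞),
          IsEnum A.1 e len →
          (Φ A).1.len = len ∧ ∀ k : ℕ, (k : ℕ∞) < len → (Φ A).1.x k = (e k).1) ∧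
      (∀ s : {s : PSeq // GoodSeq s}, ∃ y : ℕ → ℕ,
          (∀ k : ℕ, (k : ℕ∞) < s.1.len →
            (y k : ℤ) = 1 + ((Finset.range k).filter
                (fun i => |s.1.x k - s.1.x i| = 1)).fold max (-1)
                (fun i => (y i : ℤ))) ∧
          IsEnum (Φ.symm s).1 (fun k => (s.1.x k, y k)) s.1.len)) := by
  constructor
  · intro A e len hS hE
    exact ⟨PathEnc.enum_condA hS.1 hE, PathEnc.enum_condB hS.1 hE⟩
  · refine ⟨PathEnc.Phi, ?_, ?_⟩
    · intro A e len hE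
      obtain ⟨hl, hv⟩ := PathEnc.enum_unique (PathEnc.toSeq_enum A.2) hE
      refine ⟨hl, ?_⟩
      intro k hk
      have hk' : (k : ℕ∞) < (PathEnc.toSeq A.1 A.2).len := by
        rw [PathEnc.toSeq_len, hl]; exact hk
      show (PathEnc.toSeq A.1 A.2).x k = (e k).1
      rw [PathEnc.toSeq_x_eq A.2 hk',
        hv k (by rwa [PathEnc.toSeq_len] at hk')]
    · intro s
      refine ⟨PathEnc.yrec s.1.x, ?_, ?_⟩
      · intro k _
        rw [PathEnc.yrec_eq, PathEnc.sup_cast_fold]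
      · exact PathEnc.seqSet_enum s.2.2.1
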